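/- Suppose G = (I − Q)^{-1} P where Q, P are p×p matrices (over a field, e.g. real rational functions evaluated at a generic point), diag(Q) = 0, P is diagonal and invertible. Then (Q, P) is uniquely determined by G: if (I − Q₁)^{-1}P₁ = (I − Q₂)^{-1}P₂ with both pairs satisfying diag(Qᵢ)=0 and Pᵢ diagonal invertible, then Q₁ = Q₂ and P₁ = P₂. -/
import Mathlib


open Matrix

/-- Identifiability of the DSF `(Q, P)` from `G = (I − Q)⁻¹P`: if
`(I − Q₁)⁻¹P₁ = (I − Q₂)⁻¹P₂` with `diag(Qᵢ) = 0`, `I − Qᵢ` invertible, and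
`Pᵢ` diagonal invertible, then `Q₁ = Q₂` and `P₁ = P₂`. -/
theorem dsf_identifiability {p : ℕ} {K : Type*} [Field K]
    (Q₁ Q₂ P₁ P₂ : Matrix (Fin p) (Fin p) K)
    (hQ₁ : ∀ i, Q₁ i i = 0) (hQ₂ : ∀ i, Q₂ i i = 0)
    (hIQ₁ : IsUnit (1 - Q₁)) (hIQ₂ : IsUnit (1 - Q₂))
    (hP₁ : P₁.IsDiag) (hP₂ : P₂.IsDiag)
    (hP₁u : IsUnit P₁) (hP₂u : IsUnit P₂)
    (hG : (1 - Q₁)⁻¹ * P₁ = (1 - Q₂)⁻¹ * P₂) :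
    Q₁ = Q₂ ∧ P₁ = P₂ := by
  have hd₁ : P₁ = diagonal P₁.diag := hP₁.diagonal_diag.symm
  have hd₂ : P₂ = diagonal P₂.diag := hP₂.diagonal_diag.symm
  have hdet₁ : IsUnit P₁.det := (Matrix.isUnit_iff_isUnit_det _).mp hP₁u
  have hdet₂ : IsUnit P₂.det := (Matrix.isUnit_iff_isUnit_det _).mp hP₂u
  -- diagonal entries of Pᵢ are nonzero
  have hu₁ : ∀ i, P₁ i i ≠ 0 := by
    intro i h
    have hdet := hdet₁
    rw [hd₁, Matrix.det_diagonal] at hdet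
    exact hdet.ne_zero
      (Finset.prod_eq_zero (Finset.mem_univ i) (by simpa [Matrix.diag] using h))
  have hu₂ : ∀ i, P₂ i i ≠ 0 := by
    intro i h
    have hdet := hdet₂
    rw [hd₂, Matrix.det_diagonal] at hdet
    exact hdet.ne_zero
      (Finset.prod_eq_zero (Finset.mem_univ i) (by simpa [Matrix.diag] using h))
  -- explicit inverses of P₁, P₂
  have hinv₁ : P₁⁻¹ = diagonal (fun i => (P₁ i i)⁻¹) := by
    apply Matrix.inv_eq_right_inv
    nth_rewrite 1 [hd₁]
    rw [Matrix.diagonal_mul_diagonal, ← Matrix.diagonal_one]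
    exact congrArg Matrix.diagonal (funext fun i => mul_inv_cancel₀ (hu₁ i))
  have hinv₂ : P₂⁻¹ = diagonal (fun i => (P₂ i i)⁻¹) := by
    apply Matrix.inv_eq_right_inv
    nth_rewrite 1 [hd₂]
    rw [Matrix.diagonal_mul_diagonal, ← Matrix.diagonal_one]
    exact congrArg Matrix.diagonal (funext fun i => mul_inv_cancel₀ (hu₂ i))
  -- invert both sides of hG
  have hinv : P₁⁻¹ * (1 - Q₁) = P₂⁻¹ * (1 - Q₂) := by
    have := congrArg (fun M : Matrix (Fin p) (Fin p) K => M⁻¹) hG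
    simp only [Matrix.mul_inv_rev] at this
    rwa [Matrix.nonsing_inv_nonsing_inv _ ((Matrix.isUnit_iff_isUnit_det _).mp hIQ₁),
      Matrix.nonsing_inv_nonsing_inv _ ((Matrix.isUnit_iff_isUnit_det _).mp hIQ₂)] at this
  -- compare diagonal entries to get P₁ = P₂
  have hdiag : ∀ i, (P₁ i i)⁻¹ = (P₂ i i)⁻¹ := by
    intro i
    have h := congrFun (congrFun hinv i) i
    rw [hinv₁, hinv₂] at h
    simpa [Matrix.mul_apply, Matrix.diagonal_apply, Matrix.one_apply, hQ₁ i, hQ₂ i,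
      Matrix.sub_apply] using h
  have hPeq : P₁ = P₂ := by
    ext i j
    rcases eq_or_ne i j with rfl | h
    · exact inv_injective (hdiag i)
    · rw [hP₁ h, hP₂ h]
  have hQeq : (1 : Matrix (Fin p) (Fin p) K) - Q₁ = 1 - Q₂ := by
    have h1 : P₁⁻¹ * (1 - Q₁) = P₁⁻¹ * (1 - Q₂) := by rw [hinv, hPeq]
    calc (1 : Matrix (Fin p) (Fin p) K) - Q₁
        = P₁ * (P₁⁻¹ * (1 - Q₁)) := by
          rw [← Matrix.mul_assoc, Matrix.mul_nonsing_inv _ hdet₁, Matrix.one_mul]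
      _ = P₁ * (P₁⁻¹ * (1 - Q₂)) := by rw [h1]
      _ = 1 - Q₂ := by
          rw [← Matrix.mul_assoc, Matrix.mul_nonsing_inv _ hdet₁, Matrix.one_mul]
  exact ⟨sub_right_injective hQeq, hPeq⟩
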